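/- Let x ∈ l^2 with x_n < 0 for at most finitely many n, and let X be any global solution of the inviscid dyadic model with X(0) = x. Then the energy of X is non-increasing on [0,∞): E(t) ≤ E(s) for all 0 ≤ s ≤ t. -/

import Mathlib

open MeasureTheory Set Filter Topology

/-- `X` is a solution of the inviscid dyadic model on the time set `D`
(typically `Set.Ico 0 T` or `Set.Ici 0`), with coefficients `k` bounded by `C * 2 ^ n`.
The components of the solution are `X 1, X 2, ...`; by convention `X 0 ≡ 0` and `k 0 = 0`. -/
def IsDyadicSolutionOn (C : ℝ) (k : ℕ → ℝ) (X : ℕ → ℝ → ℝ) (D : Set ℝ) : Prop :=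
  0 < C ∧ k 0 = 0 ∧
  (∀ n : ℕ, 1 ≤ n → 0 ≤ k n ∧ k n ≤ C * 2 ^ n) ∧
  (∀ t : ℝ, X 0 t = 0) ∧
  (∀ n : ℕ, 1 ≤ n → ∀ t ∈ D, HasDerivWithinAt (X n)
      (k (n - 1) * X (n - 1) t ^ 2 - k n * X n t * X (n + 1) t) D t) ∧
  (∀ t ∈ D, Summable fun j : ℕ => X (j + 1) t ^ 2)

/-- The energy `E(t) = ∑_{j ≥ 1} X_j(t)^2`. -/
noncomputable def energy (X : ℕ → ℝ → ℝ) (t : ℝ) : ℝ :=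
  ∑' j : ℕ, X (j + 1) t ^ 2

/-- The function `a(t) = sup_{n ≥ 1} (- k_n X_{n+1}(t))`. -/
noncomputable def classKfun (k : ℕ → ℝ) (X : ℕ → ℝ → ℝ) (t : ℝ) : ℝ :=
  ⨆ n : ℕ, -(k (n + 1) * X (n + 2) t)

/-- A solution is of class `K` if `a(t) = sup_{n ≥ 1} (- k_n X_{n+1}(t))` is locally
integrable on `[0,∞)`. -/
def IsClassK (k : ℕ → ℝ) (X : ℕ → ℝ → ℝ) : Prop :=
  LocallyIntegrableOn (classKfun k X) (Set.Ici 0)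

/-- Positivity is preserved: if `X n 0 ≥ 0` then `X n t ≥ 0` for all `t ≥ 0`. -/
lemma dyadic_pos_preserved (C : ℝ) (k : ℕ → ℝ) (X : ℕ → ℝ → ℝ)
    (hX : IsDyadicSolutionOn C k X (Set.Ici 0))
    (n : ℕ) (hn : 1 ≤ n) (h0 : 0 ≤ X n 0) :
    ∀ b : ℝ, 0 ≤ b → 0 ≤ X n b := by
  obtain ⟨hC, hk0, hk, hX0, hderiv, hsum⟩ := hX
  have hkpos : ∀ j : ℕ, 0 ≤ k j := by
    intro j
    rcases Nat.eq_zero_or_pos j with hj | hj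
    · simp [hj, hk0]
    · exact (hk j hj).1
  have hcont : ∀ j : ℕ, 1 ≤ j → ContinuousOn (X j) (Set.Ici 0) := fun j hj t ht =>
    (hderiv j hj t ht).continuousWithinAt
  intro b hb
  by_contra hneg
  push_neg at hneg
  -- b > 0
  have hb0 : b ≠ 0 := by
    intro h; rw [h] at hneg; linarith
  -- bound on g t = k n * X (n+1) t on Icc 0 b
  have hIcc : Set.Icc (0:ℝ) b ⊆ Set.Ici 0 := fun x hx => hx.1
  obtain ⟨M, hM⟩ := (isCompact_Icc (a := (0:ℝ)) (b := b)).exists_bound_of_continuousOn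
    ((continuousOn_const.mul (hcont (n+1) (by omega))).mono hIcc)
  have hM' : ∀ t ∈ Set.Icc (0:ℝ) b, |k n * X (n+1) t| ≤ M := fun t ht => hM t ht
  -- the set of times in [0,b] where X n is nonneg
  set A : Set ℝ := Set.Icc (0:ℝ) b ∩ {t | 0 ≤ X n t} with hA
  have hclosedA : IsClosed A := by
    apply ContinuousOn.preimage_isClosed_of_isClosed ((hcont n hn).mono hIcc) isClosed_Icc
      (isClosed_Ici (a := (0:ℝ)))
  have h0A : (0:ℝ) ∈ A := ⟨⟨le_refl 0, hb⟩, h0⟩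
  have hbddA : BddAbove A := ⟨b, fun x hx => hx.1.2⟩
  set τ := sSup A with hτ
  have hτA : τ ∈ A := hclosedA.csSup_mem ⟨0, h0A⟩ hbddA
  have hτ0 : 0 ≤ τ := hτA.1.1
  have hτb : τ ≤ b := hτA.1.2
  have hXτ : 0 ≤ X n τ := hτA.2
  have hτltb : τ < b := by
    by_contra hcon
    push_neg at hcon
    have heq : τ = b := le_antisymm hτb hcon
    rw [heq] at hXτ
    linarith
  -- X n < 0 strictly right of τ
  have hnegright : ∀ t, τ < t → t ≤ b → X n t < 0 := by
    intro t ht htb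
    by_contra h
    push_neg at h
    have : t ∈ A := ⟨⟨le_trans hτ0 ht.le, htb⟩, h⟩
    exact absurd (le_csSup hbddA this) (not_le.2 ht)
  -- the auxiliary function h = X n * exp (-M t)
  set h : ℝ → ℝ := fun t => X n t * Real.exp (-M * t) with hh
  set d : ℝ → ℝ := fun t =>
    (k (n-1) * X (n-1) t ^ 2 - k n * X n t * X (n+1) t) * Real.exp (-M * t)
      + X n t * (Real.exp (-M * t) * (-M)) with hd
  have hIccτ : Set.Icc τ b ⊆ Set.Ici (0:ℝ) := fun x hx => le_trans hτ0 hx.1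
  have hIooτ : Set.Ioo τ b ⊆ Set.Ici (0:ℝ) := fun x hx => le_trans hτ0 hx.1.le
  have hderivh : ∀ t ∈ interior (Set.Icc τ b),
      HasDerivWithinAt h (d t) (interior (Set.Icc τ b)) t := by
    intro t ht
    rw [interior_Icc] at ht ⊢
    have h1 := (hderiv n hn t (hIooτ ht)).mono hIooτ
    have h2 : HasDerivWithinAt (fun u => Real.exp (-M * u))
        (Real.exp (-M * t) * (-M)) (Set.Ioo τ b) t := by
      have := ((hasDerivAt_id t).const_mul (-M)).exp
      simpa [mul_comm] using this.hasDerivWithinAt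
    exact h1.mul h2
  have hdnonneg : ∀ t ∈ interior (Set.Icc τ b), 0 ≤ d t := by
    intro t ht
    rw [interior_Icc] at ht
    have hXneg : X n t < 0 := hnegright t ht.1 ht.2.le
    have htIcc : t ∈ Set.Icc (0:ℝ) b := ⟨le_trans hτ0 ht.1.le, ht.2.le⟩
    have hg := hM' t htIcc
    have hgl : -M ≤ k n * X (n+1) t := neg_le_of_abs_le hg
    have hexp : 0 < Real.exp (-M * t) := Real.exp_pos _
    have hfirst : 0 ≤ k (n-1) * X (n-1) t ^ 2 :=
      mul_nonneg (hkpos _) (sq_nonneg _)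
    have key : 0 ≤ k (n-1) * X (n-1) t ^ 2 - k n * X n t * X (n+1) t - M * X n t := by
      nlinarith [mul_nonneg (neg_nonneg.2 hXneg.le) (by linarith : 0 ≤ k n * X (n+1) t + M)]
    have : d t = (k (n-1) * X (n-1) t ^ 2 - k n * X n t * X (n+1) t - M * X n t)
        * Real.exp (-M * t) := by
      simp only [hd]; ring
    rw [this]
    exact mul_nonneg key hexp.le
  have hconth : ContinuousOn h (Set.Icc τ b) :=
    (((hcont n hn).mono hIccτ).mul (Real.continuous_exp.comp
      (continuous_const.mul continuous_id)).continuousOn)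
  have hmono : MonotoneOn h (Set.Icc τ b) :=
    monotoneOn_of_hasDerivWithinAt_nonneg (convex_Icc τ b) hconth hderivh hdnonneg
  have hτmem : τ ∈ Set.Icc τ b := ⟨le_refl τ, hτb⟩
  have hbmem : b ∈ Set.Icc τ b := ⟨hτb, le_refl b⟩
  have := hmono hτmem hbmem hτltb.le
  have h1 : 0 ≤ h τ := mul_nonneg hXτ (Real.exp_pos _).le
  have h2 : h b < 0 := mul_neg_of_neg_of_pos hneg (Real.exp_pos _)
  linarith

/-- for any global solution whose initial condition has at most
finitely many negative components, the energy is non-increasing on `[0,∞)`. -/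
theorem energy_nonincreasing_of_Hplus_initial
    (C : ℝ) (k : ℕ → ℝ) (X : ℕ → ℝ → ℝ)
    (hX : IsDyadicSolutionOn C k X (Set.Ici 0))
    (hfin : {n : ℕ | X n 0 < 0}.Finite) :
    ∀ s t : ℝ, 0 ≤ s → s ≤ t → energy X t ≤ energy X s := by
  obtain ⟨hC, hk0, hk, hX0, hderiv, hsum⟩ := hX
  have hkpos : ∀ j : ℕ, 0 ≤ k j := by
    intro j
    rcases Nat.eq_zero_or_pos j with hj | hj
    · simp [hj, hk0]
    · exact (hk j hj).1
  have hcont : ∀ j : ℕ, 1 ≤ j → ContinuousOn (X j) (Set.Ici 0) := fun j hj t ht =>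
    (hderiv j hj t ht).continuousWithinAt
  obtain ⟨m, hm⟩ := hfin.bddAbove
  have hpos : ∀ n : ℕ, m + 1 ≤ n → ∀ t : ℝ, 0 ≤ t → 0 ≤ X n t := by
    intro n hn t ht
    have h0 : 0 ≤ X n 0 := by
      by_contra h
      push_neg at h
      have : n ∈ {n : ℕ | X n 0 < 0} := h
      have := hm this
      omega
    exact dyadic_pos_preserved C k X
      ⟨hC, hk0, hk, hX0, hderiv, hsum⟩ n (by omega) h0 t ht
  intro s t hs hst
  have ht : 0 ≤ t := le_trans hs hst
  -- partial sums
  set S : ℕ → ℝ → ℝ := fun N u => ∑ j ∈ Finset.range N, X (j+1) u ^ 2 with hS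
  set F : ℕ → ℝ → ℝ := fun j u => 2 * k j * X j u ^ 2 * X (j+1) u with hF
  have hderivS : ∀ N : ℕ, ∀ u ∈ Set.Ici (0:ℝ),
      HasDerivWithinAt (S N) (-(F N u)) (Set.Ici 0) u := by
    intro N u hu
    have h1 : HasDerivWithinAt (S N)
        (∑ j ∈ Finset.range N, ((fun i => F i u) j - (fun i => F i u) (j+1)))
        (Set.Ici 0) u := by
      apply HasDerivWithinAt.fun_sum
      intro j _
      have h2 := (hderiv (j+1) (by omega) u hu).fun_pow 2
      convert h2 using 1
      case e'_4 => rfl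
      show F j u - F (j+1) u = _
      simp only [hF, Nat.add_sub_cancel, pow_one, Nat.cast_ofNat]
      ring
    have heq : (∑ j ∈ Finset.range N, ((fun i => F i u) j - (fun i => F i u) (j+1)))
        = -(F N u) := by
      rw [Finset.sum_range_sub' (fun i => F i u) N]
      simp [hF, hk0]
    rwa [heq] at h1
  -- S N antitone on Ici 0 for N ≥ m+1
  have hanti : ∀ N : ℕ, m + 1 ≤ N → S N t ≤ S N s := by
    intro N hN
    have hA : AntitoneOn (S N) (Set.Ici 0) := by
      apply antitoneOn_of_hasDerivWithinAt_nonpos (convex_Ici 0)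
        (f' := fun u => -(F N u))
      · exact continuousOn_finset_sum _ fun j _ => (hcont (j+1) (by omega)).pow 2
      · intro u hu
        rw [interior_Ici] at hu ⊢
        exact (hderivS N u (Set.mem_Ici.2 (Set.mem_Ioi.1 hu).le)).mono Set.Ioi_subset_Ici_self
      · intro u hu
        rw [interior_Ici] at hu
        have h1 : 0 ≤ F N u := by
          apply mul_nonneg (mul_nonneg (mul_nonneg (by norm_num) (hkpos N)) (sq_nonneg _))
          exact hpos (N+1) (by omega) u hu.le
        linarith
    exact hA hs (le_trans hs hst) hst
  -- pass to the limit
  have hts : Tendsto (fun N => S N t) atTop (𝓝 (energy X t)) :=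
    (hsum t ht).hasSum.tendsto_sum_nat
  have hss : Tendsto (fun N => S N s) atTop (𝓝 (energy X s)) :=
    (hsum s hs).hasSum.tendsto_sum_nat
  exact le_of_tendsto_of_tendsto hts hss (eventually_atTop.2 ⟨m+1, hanti⟩)
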